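/- Let q be an odd prime, m a positive integer, and r a nonzero rational number. (a) If the q-adic valuation of r is ≥ 0, then either T_m(r) = 0 or the q-adic valuation of T_m(r) is ≥ 0. (b) If the q-adic valuation of r is < 0, then T_m(r) ≠ 0 and the q-adic valuation of T_m(r) equals m times the q-adic valuation of r. -/

import Mathlib

open Polynomial

private lemma padicNorm_two_eq_one {q : ℕ} [Fact q.Prime] (hq : q.Prime) (hqodd : Odd q) :
    padicNorm q (2 : ℚ) = 1 := by
  have : ¬ ((q : ℤ) ∣ (2 : ℤ)) := by
    intro h
    have h2 : q ∣ 2 := by exact_mod_cast h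
    have := (Nat.prime_dvd_prime_iff_eq hq Nat.prime_two).mp h2
    subst this
    simp [Nat.odd_iff] at hqodd
  simpa using (padicNorm.int_eq_one_iff (p := q) (2 : ℤ)).mpr this

private lemma cheb_norm_le_one {q : ℕ} [Fact q.Prime] {r : ℚ}
    (h : padicNorm q r ≤ 1) :
    ∀ n : ℕ, padicNorm q ((Chebyshev.T ℚ n).eval r) ≤ 1 := by
  intro n
  induction n using Nat.twoStepInduction with
  | zero => simp
  | one => simpa using h
  | more n ih1 ih2 =>
    have hc : ((n : ℤ) + 2) = ((n + 2 : ℕ) : ℤ) := by push_cast; ring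
    rw [← hc, Chebyshev.T_add_two]
    simp only [eval_sub, eval_mul, eval_ofNat, eval_X]
    refine le_trans padicNorm.sub (max_le ?_ ih1)
    rw [padicNorm.mul, padicNorm.mul]
    have h2 : padicNorm q (2 : ℚ) ≤ 1 := by
      simpa using padicNorm.of_int (p := q) (2 : ℤ)
    calc padicNorm q 2 * padicNorm q r * padicNorm q ((Chebyshev.T ℚ (↑n + 1)).eval r)
        ≤ 1 * 1 * 1 := by
          gcongr <;> first
            | exact h2 | exact h
            | simpa using ih2
            | exact padicNorm.nonneg _
      _ = 1 := by ring

private lemma cheb_norm_eq {q : ℕ} [Fact q.Prime] (hq : q.Prime) (hqodd : Odd q) {r : ℚ}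
    (h : 1 < padicNorm q r) :
    ∀ n : ℕ, padicNorm q ((Chebyshev.T ℚ n).eval r) = padicNorm q r ^ n := by
  intro n
  induction n using Nat.twoStepInduction with
  | zero => simp
  | one => simp
  | more n ih1 ih2 =>
    have hc : ((n : ℤ) + 2) = ((n + 2 : ℕ) : ℤ) := by push_cast; ring
    rw [← hc, Chebyshev.T_add_two]
    simp only [eval_sub, eval_mul, eval_ofNat, eval_X]
    have ih2' : padicNorm q ((Chebyshev.T ℚ (↑n + 1)).eval r) = padicNorm q r ^ (n + 1) := by
      simpa using ih2
    have hlead : padicNorm q (2 * r * (Chebyshev.T ℚ (↑n + 1)).eval r)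
        = padicNorm q r ^ (n + 2) := by
      rw [padicNorm.mul, padicNorm.mul, padicNorm_two_eq_one hq hqodd, ih2', one_mul]
      ring
    have hne : padicNorm q (2 * r * (Chebyshev.T ℚ (↑n + 1)).eval r)
        ≠ padicNorm q (-(Chebyshev.T ℚ (n : ℤ)).eval r) := by
      rw [hlead, padicNorm.neg, ih1]
      exact ne_of_gt (pow_lt_pow_right₀ h (by omega))
    have := padicNorm.add_eq_max_of_ne (p := q) hne
    rw [sub_eq_add_neg]
    rw [this, hlead, padicNorm.neg, ih1]
    exact max_eq_left (le_of_lt (pow_lt_pow_right₀ h (by omega)))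

/-- Let `q` be an odd prime, `m` a positive integer and `r` a nonzero
rational number.  (a) If the `q`-adic valuation of `r` is nonnegative, then either
`T_m(r) = 0` or the `q`-adic valuation of `T_m(r)` is nonnegative.  (b) If the `q`-adic
valuation of `r` is negative, then `T_m(r) ≠ 0` and the `q`-adic valuation of `T_m(r)`
is `m` times that of `r`. -/
theorem padicValRat_chebyshev (q : ℕ) (hq : q.Prime) (hqodd : Odd q)
    (m : ℕ) (hm : 0 < m) (r : ℚ) (hr : r ≠ 0) :
    (0 ≤ padicValRat q r →
      (Chebyshev.T ℚ m).eval r = 0 ∨ 0 ≤ padicValRat q ((Chebyshev.T ℚ m).eval r)) ∧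
    (padicValRat q r < 0 →
      (Chebyshev.T ℚ m).eval r ≠ 0 ∧
        padicValRat q ((Chebyshev.T ℚ m).eval r) = m * padicValRat q r) := by
  haveI : Fact q.Prime := ⟨hq⟩
  have hq1 : (1 : ℚ) < q := by exact_mod_cast hq.one_lt
  have hnr : padicNorm q r = (q : ℚ) ^ (-padicValRat q r) :=
    padicNorm.eq_zpow_of_nonzero hr
  constructor
  · intro hv
    by_cases he : (Chebyshev.T ℚ m).eval r = 0
    · exact Or.inl he
    · right
      have hle : padicNorm q r ≤ 1 := by
        rw [hnr]
        exact zpow_le_one_of_nonpos₀ (le_of_lt hq1) (by omega)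
      have := cheb_norm_le_one (q := q) hle m
      rw [padicNorm.eq_zpow_of_nonzero he] at this
      have : -padicValRat q ((Chebyshev.T ℚ m).eval r) ≤ 0 := by
        by_contra hcon
        push_neg at hcon
        exact absurd this (not_le.mpr (one_lt_zpow₀ hq1 hcon))
      omega
  · intro hv
    have hgt : 1 < padicNorm q r := by
      rw [hnr]
      exact one_lt_zpow₀ hq1 (by omega)
    have key := cheb_norm_eq (q := q) hq hqodd hgt m
    have he : (Chebyshev.T ℚ m).eval r ≠ 0 := by
      intro h0
      rw [h0, padicNorm.zero] at key
      have : (0 : ℚ) < padicNorm q r ^ m := pow_pos (lt_trans one_pos hgt) m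
      linarith
    refine ⟨he, ?_⟩
    rw [padicNorm.eq_zpow_of_nonzero he, hnr, ← zpow_natCast, ← zpow_mul] at key
    have hinj := zpow_right_injective₀ (lt_trans one_pos hq1) (ne_of_gt hq1) key
    have : -padicValRat q ((Chebyshev.T ℚ m).eval r) = -padicValRat q r * m := hinj
    push_cast
    linarith [this]
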